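/- Let R be a commutative ring and C a contraadjusted R-module (Ext^1_R(R[t^{-1}], C) = 0 for every t ∈ R). Then for every r ∈ R, the R[r^{-1}]-module Hom_R(R[r^{-1}], C) is a contraadjusted R[r^{-1}]-module. -/

import Mathlib

open CategoryTheory

/-- The module structure over a commutative `R`-algebra `S` on `Hom_R(S, C)`, acting through
the first (domain) argument: `(s • f) x = f (s * x)`. -/
noncomputable instance homDomainModule (R : Type) [CommRing R] (S : Type) [CommRing S]
    [Algebra R S] (C : Type) [AddCommGroup C] [Module R C] :
    Module S (S →ₗ[R] C) where
  smul s f := f ∘ₗ Algebra.lmul R S s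
  one_smul f := by ext x; show f (1 * x) = f x; rw [one_mul]
  mul_smul s t f := by
    ext x; show f (s * t * x) = f (t * (s * x)); congr 1; ring
  smul_zero s := by ext x; show (0 : S →ₗ[R] C) (s * x) = 0; simp
  smul_add s f g := by
    ext x; show (f + g) (s * x) = f (s * x) + g (s * x); simp
  add_smul s t f := by
    ext x; show f ((s + t) * x) = f (s * x) + f (t * x); rw [add_mul, map_add]
  zero_smul f := by ext x; show f (0 * x) = 0; rw [zero_mul, map_zero]

noncomputable section

namespace ContraAux



variable {A : Type} [CommRing A]

/-- telescope endomorphism of `ℕ →₀ A`: `e m ↦ e m - t • e (m+1)` -/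
def tau (t : A) : (ℕ →₀ A) →ₗ[A] (ℕ →₀ A) :=
  LinearMap.id - t • Finsupp.lmapDomain A A (· + 1)

lemma tau_single (t : A) (m : ℕ) (a : A) :
    tau t (Finsupp.single m a) = Finsupp.single m a - Finsupp.single (m + 1) (t * a) := by
  simp [tau, Finsupp.mapDomain_single, Finsupp.smul_single, smul_eq_mul]

lemma tau_apply_zero (t : A) (x : ℕ →₀ A) : (tau t x) 0 = x 0 := by
  have h0 : (0 : ℕ) ∉ Set.range (· + 1 : ℕ → ℕ) := by
    rintro ⟨k, hk⟩; simp at hk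
  simp [tau, Finsupp.mapDomain_notin_range _ _ h0]

lemma tau_apply_succ (t : A) (x : ℕ →₀ A) (m : ℕ) :
    (tau t x) (m + 1) = x (m + 1) - t * x m := by
  have hinj : Function.Injective (· + 1 : ℕ → ℕ) := fun a b h => by simpa using h
  have := Finsupp.mapDomain_apply hinj x m
  simp only [tau, LinearMap.sub_apply, LinearMap.id_apply, LinearMap.smul_apply,
    Finsupp.lmapDomain_apply, Finsupp.coe_sub, Finsupp.coe_smul, Pi.sub_apply, Pi.smul_apply,
    smul_eq_mul]
  rw [this]

lemma tau_injective (t : A) : Function.Injective (tau t) := by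
  rw [← LinearMap.ker_eq_bot]
  rw [Submodule.eq_bot_iff]
  intro x hx
  rw [LinearMap.mem_ker] at hx
  ext k
  induction k with
  | zero =>
    have := tau_apply_zero t x
    rw [hx] at this
    rw [Finsupp.coe_zero, Pi.zero_apply] at this ⊢
    exact this.symm
  | succ m ih =>
    have := tau_apply_succ t x m
    rw [hx] at this
    rw [Finsupp.coe_zero, Pi.zero_apply] at this ih ⊢
    have h2 : x (m + 1) = t * x m := by
      have := this.symm
      rwa [sub_eq_zero] at this
    rw [h2, ih, mul_zero]

/-- `t⁻¹` in `Localization.Away t`. -/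
def invS (t : A) : Localization.Away t :=
  IsLocalization.mk' (Localization.Away t) (1 : A) ⟨t, Submonoid.mem_powers _⟩

lemma algebraMap_mul_invS (t : A) : algebraMap A (Localization.Away t) t * invS t = 1 :=
  IsLocalization.Away.mul_invSelf t

lemma smul_invS_pow (t : A) (m : ℕ) : t • invS t ^ (m + 1) = invS t ^ m := by
  rw [Algebra.smul_def, pow_succ, ← mul_assoc, mul_comm ((algebraMap A (Localization.Away t)) t),
    mul_assoc, algebraMap_mul_invS, mul_one]

lemma invS_pow (t : A) (m : ℕ) :
    invS t ^ m = IsLocalization.mk' (Localization.Away t) (1 : A)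
      ⟨t ^ m, pow_mem (Submonoid.mem_powers t) m⟩ := by
  induction m with
  | zero =>
    have : (⟨t ^ 0, pow_mem (Submonoid.mem_powers t) 0⟩ : Submonoid.powers t) = 1 :=
      Subtype.ext (pow_zero t)
    rw [pow_zero, this, IsLocalization.mk'_one, map_one]
  | succ m ih =>
    rw [pow_succ, ih, invS, ← IsLocalization.mk'_mul]
    congr 1
    · rw [one_mul]
    · exact Subtype.ext (pow_succ t m).symm

lemma smul_invS_pow_eq_mk' (t : A) (b : A) (m : ℕ) :
    b • invS t ^ m = IsLocalization.mk' (Localization.Away t) b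
      ⟨t ^ m, pow_mem (Submonoid.mem_powers t) m⟩ := by
  rw [invS_pow, IsLocalization.smul_mk'_one]

/-- The augmentation `ℕ →₀ A → A[t⁻¹]`, `e m ↦ t⁻ᵐ`. -/
def piA (t : A) : (ℕ →₀ A) →ₗ[A] Localization.Away t :=
  Finsupp.linearCombination A fun m => invS t ^ m

lemma piA_single (t : A) (m : ℕ) (a : A) :
    piA t (Finsupp.single m a) = a • invS t ^ m := by
  simp [piA, Finsupp.linearCombination_single]

lemma piA_surjective (t : A) : Function.Surjective (piA t) := by
  intro z
  obtain ⟨⟨x, y⟩, hxy⟩ := IsLocalization.mk'_surjective (Submonoid.powers t) z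
  dsimp only at hxy
  obtain ⟨n, hn⟩ := y.2
  refine ⟨Finsupp.single n x, ?_⟩
  rw [piA_single, smul_invS_pow_eq_mk', ← hxy]
  congr 1
  exact Subtype.ext hn

lemma piA_tau (t : A) : (piA t).comp (tau t) = 0 := by
  refine Finsupp.lhom_ext' fun m => ?_
  ext
  simp only [LinearMap.comp_apply, Finsupp.lsingle_apply, LinearMap.zero_apply]
  rw [tau_single, map_sub, piA_single, piA_single, mul_one, ← smul_invS_pow t m, one_smul,
    sub_self]

lemma single_sub_single_mem_range (t : A) (m k : ℕ) (a : A) :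
    Finsupp.single m a - Finsupp.single (m + k) (t ^ k * a) ∈ LinearMap.range (tau t) := by
  induction k with
  | zero => simp
  | succ k ih =>
    have h2 : tau t (Finsupp.single (m + k) (t ^ k * a)) =
        Finsupp.single (m + k) (t ^ k * a) - Finsupp.single (m + (k + 1)) (t ^ (k + 1) * a) := by
      rw [tau_single, show m + k + 1 = m + (k + 1) by omega, ← mul_assoc, ← pow_succ']
    have := Submodule.add_mem _ ih
      (LinearMap.mem_range_self (tau t) (Finsupp.single (m + k) (t ^ k * a)))
    rw [h2] at this
    convert this using 1
    abel

lemma exists_reduce (t : A) (x : ℕ →₀ A) :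
    ∃ (M : ℕ) (b : A), x - Finsupp.single M b ∈ LinearMap.range (tau t) := by
  induction x using Finsupp.induction with
  | zero => exact ⟨0, 0, by simp⟩
  | single_add n a y _ _ ih =>
    obtain ⟨M, b, hy⟩ := ih
    refine ⟨max n M, t ^ (max n M - n) * a + t ^ (max n M - M) * b, ?_⟩
    have h1 := single_sub_single_mem_range t n (max n M - n) a
    have h2 := single_sub_single_mem_range t M (max n M - M) b
    rw [show n + (max n M - n) = max n M by omega] at h1
    rw [show M + (max n M - M) = max n M by omega] at h2
    have := Submodule.add_mem _ (Submodule.add_mem _ h1 h2) hy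
    convert this using 1
    rw [Finsupp.single_add]
    abel

lemma ker_piA_le_range_tau (t : A) : LinearMap.ker (piA t) ≤ LinearMap.range (tau t) := by
  intro x hx
  rw [LinearMap.mem_ker] at hx
  obtain ⟨M, b, hmem⟩ := exists_reduce t x
  have hpib : piA t (Finsupp.single M b) = 0 := by
    obtain ⟨y, hy⟩ := hmem
    have : piA t (x - Finsupp.single M b) = 0 := by
      rw [← hy, ← LinearMap.comp_apply, piA_tau, LinearMap.zero_apply]
    rw [map_sub, hx, zero_sub, neg_eq_zero] at this
    exact this
  rw [piA_single, smul_invS_pow_eq_mk', IsLocalization.mk'_eq_zero_iff] at hpib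
  obtain ⟨⟨c, k, hc⟩, hcb⟩ := hpib
  simp only at hcb
  have hcb' : t ^ k * b = 0 := by rw [show t ^ k = c from hc]; exact hcb
  have h1 := single_sub_single_mem_range t M k b
  rw [hcb', Finsupp.single_zero, sub_zero] at h1
  obtain ⟨y, hy⟩ := hmem
  have : x = (x - Finsupp.single M b) + Finsupp.single M b := by abel
  rw [this]
  exact Submodule.add_mem _ (⟨y, hy⟩) h1



variable {A : Type} [CommRing A]


/-- The objects of the telescope resolution. -/
def cpxX (A : Type) [CommRing A] : ℕ → ModuleCat A
  | 0 => ModuleCat.of A (ℕ →₀ A)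
  | 1 => ModuleCat.of A (ℕ →₀ A)
  | _ + 2 => ModuleCat.of A PUnit

def cpxd (t : A) : ∀ n, cpxX A (n + 1) ⟶ cpxX A n
  | 0 => ModuleCat.ofHom (tau t)
  | _ + 1 => 0

/-- The telescope resolution complex of `Localization.Away t`. -/
def cpx (t : A) : ChainComplex (ModuleCat A) ℕ :=
  ChainComplex.of (cpxX A) (cpxd t) (by
    intro n
    match n with
    | 0 => exact Limits.zero_comp
    | n + 1 => exact Limits.zero_comp)

instance cpx_projective (t : A) (n : ℕ) : Projective ((cpx t).X n) := by
  match n with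
  | 0 => exact ModuleCat.projective_of_free (ι := ℕ) Finsupp.basisSingleOne
  | 1 => exact ModuleCat.projective_of_free (ι := ℕ) Finsupp.basisSingleOne
  | n + 2 =>
    have : Subsingleton ((cpx t).X (n + 2)) := inferInstanceAs (Subsingleton PUnit)
    exact (ModuleCat.isZero_of_subsingleton _).projective


lemma cpx_d_1_0 (t : A) : (cpx t).d 1 0 = ModuleCat.ofHom (tau t) :=
  ChainComplex.of_d (cpxX A) (cpxd t) 0

lemma cpx_d_succ (t : A) (n : ℕ) : (cpx t).d (n + 2) (n + 1) = 0 :=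
  ChainComplex.of_d _ _ (n + 1)

lemma cpx_exactAt_succ (t : A) (n : ℕ) : (cpx t).ExactAt (n + 1) := by
  rw [HomologicalComplex.exactAt_iff' _ (n + 2) (n + 1) n (by simp) (by simp)]
  match n with
  | 0 =>
    rw [ShortComplex.moduleCat_exact_iff]
    intro x hx
    have hd : (cpx t).d 1 0 = ModuleCat.ofHom (tau t) := cpx_d_1_0 t
    dsimp [HomologicalComplex.sc', HomologicalComplex.shortComplexFunctor'] at x hx ⊢
    rw [hd] at hx
    have hx0 : x = 0 := by
      apply tau_injective t
      exact hx.trans (map_zero (tau t)).symm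
    exact ⟨0, by rw [hx0]; exact map_zero _⟩
  | n + 1 =>
    apply ShortComplex.exact_of_isZero_X₂
    exact @ModuleCat.isZero_of_subsingleton _ _ _ (inferInstanceAs (Subsingleton PUnit))

def cpxPi (t : A) : cpx t ⟶ (ChainComplex.single₀ (ModuleCat A)).obj
    (ModuleCat.of A (Localization.Away t)) :=
  (ChainComplex.toSingle₀Equiv _ _).symm ⟨ModuleCat.ofHom (piA t), by
    refine ModuleCat.hom_ext ?_
    rw [cpx_d_1_0]
    exact piA_tau t⟩

lemma cpxPi_f_zero (t : A) : (cpxPi t).f 0 = ModuleCat.ofHom (piA t) := by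
  simp [cpxPi, ChainComplex.toSingle₀Equiv, HomologicalComplex.mkHomToSingle_f,
    HomologicalComplex.singleObjXSelf]
  rfl

def cpxRes (t : A) : ProjectiveResolution (ModuleCat.of A (Localization.Away t)) where
  complex := cpx t
  π := cpxPi t
  quasiIso := ⟨fun n => by
    cases n with
    | zero =>
      rw [ChainComplex.quasiIsoAt₀_iff, ShortComplex.quasiIso_iff_of_zeros']
      · constructor
        · rw [ShortComplex.moduleCat_exact_iff]
          intro x hx
          dsimp at x hx ⊢
          change (ConcreteCategory.hom ((cpxPi t).f 0)) x = 0 at hx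
          rw [cpxPi_f_zero] at hx
          obtain ⟨y, hy⟩ := ker_piA_le_range_tau t (LinearMap.mem_ker.2 hx)
          refine ⟨y, ?_⟩
          change (ConcreteCategory.hom ((cpx t).d 1 0)) y = x
          rw [cpx_d_1_0]
          exact hy
        · have : Epi (ModuleCat.ofHom (piA t)) :=
            (ModuleCat.epi_iff_surjective _).2 (piA_surjective t)
          show Epi ((cpxPi t).f 0)
          rw [cpxPi_f_zero]
          exact this
      all_goals rfl
    | succ n =>
      rw [quasiIsoAt_iff_exactAt']
      · exact cpx_exactAt_succ t n
      · apply ChainComplex.exactAt_succ_single_obj⟩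



variable {A : Type} [CommRing A]


variable (R : Type) [CommRing R] (C : Type) [AddCommGroup C] [Module R C]

def Solv (t : A) (D : Type) [AddCommGroup D] [Module A D] : Prop :=
  ∀ d : ℕ → D, ∃ c : ℕ → D, ∀ n, c n - t • c (n + 1) = d n

lemma moduleCat_subsingleton_iff_of_iso {X Y : ModuleCat A} (e : X ≅ Y) :
    Subsingleton X ↔ Subsingleton Y :=
  Equiv.subsingleton_congr ((forget (ModuleCat A)).mapIso e).toEquiv

lemma moduleCat_isZero_iff_subsingleton (X : ModuleCat A) :
    Limits.IsZero X ↔ Subsingleton X := by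
  constructor
  · intro h
    refine ⟨fun a b => ?_⟩
    have h1 : (𝟙 X : X ⟶ X) = 0 := h.eq_of_src _ _
    have ha : a = (𝟙 X : X ⟶ X) a := rfl
    have hb : b = (𝟙 X : X ⟶ X) b := rfl
    rw [ha, hb, h1]
    rfl
  · intro h
    exact ModuleCat.isZero_of_subsingleton X

lemma surj_precomp_iff_solv (t : A) (D : Type) [AddCommGroup D] [Module A D] :
    (∀ f : (ℕ →₀ A) →ₗ[A] D, ∃ g : (ℕ →₀ A) →ₗ[A] D, g ∘ₗ tau t = f) ↔ Solv t D := by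
  constructor
  · intro h d
    obtain ⟨g, hg⟩ := h (Finsupp.linearCombination A d)
    refine ⟨fun m => g (Finsupp.single m 1), fun n => ?_⟩
    have := LinearMap.congr_fun hg (Finsupp.single n 1)
    rw [LinearMap.comp_apply, tau_single, map_sub, Finsupp.linearCombination_single,
      one_smul] at this
    rw [← this, mul_one]
    congr 1
    rw [← map_smul, Finsupp.smul_single, smul_eq_mul, mul_one]
  · intro h f
    obtain ⟨c, hc⟩ := h fun m => f (Finsupp.single m 1)
    refine ⟨Finsupp.linearCombination A c, ?_⟩
    refine Finsupp.lhom_ext' fun m => ?_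
    ext
    simp only [LinearMap.comp_apply, Finsupp.lsingle_apply]
    rw [tau_single, map_sub, Finsupp.linearCombination_single, one_smul, ← hc m]
    congr 1
    rw [mul_one, Finsupp.linearCombination_single]


lemma linearYonedaObj_d_apply (t : A) (D : Type) [AddCommGroup D] [Module A D]
    (y : (cpx t).X 0 ⟶ ModuleCat.of A D) :
    ModuleCat.Hom.hom (((cpx t).linearYonedaObj A (ModuleCat.of A D)).d 0 1 y :
      (cpx t).X 1 ⟶ ModuleCat.of A D) = y.hom ∘ₗ tau t := by
  have h1 : ((cpx t).linearYonedaObj A (ModuleCat.of A D)).d 0 1 y = (cpx t).d 1 0 ≫ y := by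
    rw [ChainComplex.linearYonedaObj_d]
    rfl
  rw [h1, cpx_d_1_0]
  rfl

theorem subsingleton_ext_iff (t : A) (D : Type) [AddCommGroup D] [Module A D] :
    Subsingleton (((Ext A (ModuleCat A) 1).obj
      (Opposite.op (ModuleCat.of A (Localization.Away t)))).obj (ModuleCat.of A D)) ↔
      Solv t D := by
  rw [moduleCat_subsingleton_iff_of_iso ((cpxRes t).isoExt 1 (ModuleCat.of A D))]
  rw [← moduleCat_isZero_iff_subsingleton, ← HomologicalComplex.exactAt_iff_isZero_homology,
    HomologicalComplex.exactAt_iff' _ 0 1 2 (by simp) (by simp),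
    ShortComplex.moduleCat_exact_iff, ← surj_precomp_iff_solv t D]
  haveI sub2 : Subsingleton ((cpx t).X 2 ⟶ (ModuleCat.of A D)) := by
    haveI : Subsingleton ((cpx t).X 2) := inferInstanceAs (Subsingleton PUnit)
    exact ⟨fun f g => ModuleCat.hom_ext (LinearMap.ext fun x => by rw [Subsingleton.elim x 0, map_zero, map_zero])⟩
  haveI sub2' : Subsingleton (((cpx t).linearYonedaObj A (ModuleCat.of A D)).X 2) :=
    inferInstanceAs (Subsingleton ((cpx t).X 2 ⟶ (ModuleCat.of A D)))
  have key : (∀ x₂ : ((cpx t).linearYonedaObj A (ModuleCat.of A D)).X 1,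
      ((cpx t).linearYonedaObj A (ModuleCat.of A D)).d 1 2 x₂ = 0 →
      ∃ x₁ : ((cpx t).linearYonedaObj A (ModuleCat.of A D)).X 0,
        ((cpx t).linearYonedaObj A (ModuleCat.of A D)).d 0 1 x₁ = x₂) ↔
      (∀ f : (ℕ →₀ A) →ₗ[A] D, ∃ g : (ℕ →₀ A) →ₗ[A] D, g ∘ₗ tau t = f) := by
    constructor
    · intro h f
      obtain ⟨y, hy⟩ := h (ModuleCat.ofHom f : (cpx t).X 1 ⟶ ModuleCat.of A D)
        (Subsingleton.elim _ _)
      exact ⟨ModuleCat.Hom.hom (y : (cpx t).X 0 ⟶ ModuleCat.of A D),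
        (linearYonedaObj_d_apply t D y).symm.trans
          (congrArg (fun z : (cpx t).X 1 ⟶ ModuleCat.of A D => z.hom) hy)⟩
    · intro h f hf
      obtain ⟨y, hy⟩ := h (ModuleCat.Hom.hom (f : (cpx t).X 1 ⟶ ModuleCat.of A D))
      refine ⟨(ModuleCat.ofHom y : (cpx t).X 0 ⟶ ModuleCat.of A D), ?_⟩
      apply ModuleCat.hom_ext
      exact (linearYonedaObj_d_apply t D _).trans hy
  exact key


section HomSide

variable (r : R)

lemma hom_ext (r : R) {f g : Localization.Away r →ₗ[R] C}
    (h : ∀ m, f (invS r ^ m) = g (invS r ^ m)) : f = g := by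
  have hcomp : f ∘ₗ piA r = g ∘ₗ piA r := by
    refine Finsupp.lhom_ext' fun m => ?_
    ext
    simp only [LinearMap.comp_apply, Finsupp.lsingle_apply]
    rw [piA_single, one_smul, h m]
  ext x
  obtain ⟨y, rfl⟩ := piA_surjective r x
  exact LinearMap.congr_fun hcomp y

lemma hom_mk (r : R) (u : ℕ → C) (hu : ∀ m, u m = r • u (m + 1)) :
    ∃ f : Localization.Away r →ₗ[R] C, ∀ m, f (invS r ^ m) = u m := by
  set g0 := Finsupp.linearCombination R u with hg0
  have hg0tau : g0 ∘ₗ tau r = 0 := by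
    refine Finsupp.lhom_ext' fun m => ?_
    ext
    simp only [LinearMap.comp_apply, Finsupp.lsingle_apply, LinearMap.zero_apply]
    rw [tau_single, map_sub, hg0]
    rw [Finsupp.linearCombination_single, Finsupp.linearCombination_single, one_smul, mul_one]
    rw [hu m, sub_self]
  have hker : LinearMap.ker (piA r) ≤ LinearMap.ker g0 := by
    intro x hx
    obtain ⟨y, rfl⟩ := ker_piA_le_range_tau r hx
    rw [LinearMap.mem_ker, ← LinearMap.comp_apply, hg0tau, LinearMap.zero_apply]
  set e := LinearMap.quotKerEquivOfSurjective (piA r) (piA_surjective r) with he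
  refine ⟨(LinearMap.ker (piA r)).liftQ g0 hker ∘ₗ (e.symm : Localization.Away r →ₗ[R] _), fun m => ?_⟩
  have h1 : invS r ^ m = piA r (Finsupp.single m 1) := by rw [piA_single, one_smul]
  have h2 : e.symm (piA r (Finsupp.single m 1)) =
      Submodule.Quotient.mk (Finsupp.single m 1) := by
    apply e.injective
    rw [LinearEquiv.apply_symm_apply]
    rfl
  rw [LinearMap.comp_apply, h1]
  rw [LinearEquiv.coe_coe, h2, Submodule.liftQ_apply, hg0, Finsupp.linearCombination_single,
    one_smul]

end HomSide


section UnitReduction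

lemma solv_of_unit {S' : Type} [CommRing S'] {M : Type} [AddCommGroup M] [Module S' M]
    (s : S') (v : S'ˣ) (h : Solv (s * v) M) : Solv s M := by
  intro d
  obtain ⟨b, hb⟩ := h fun n => ((v⁻¹ : S'ˣ) : S') ^ n • d n
  refine ⟨fun n => ((v : S') ^ n) • b n, fun n => ?_⟩
  have h1 : s • ((v : S') ^ (n + 1)) • b (n + 1) = (v : S') ^ n • ((s * v) • b (n + 1)) := by
    rw [smul_smul, smul_smul]
    congr 1
    rw [pow_succ]
    ring
  rw [h1, ← smul_sub, hb n, smul_smul, ← mul_pow, Units.mul_inv, one_pow, one_smul]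

end UnitReduction

section Cseq

variable {R C}

/-- The explicit solution to the two-dimensional telescope system. -/
def cseq (p r : R) (W : ℕ → C) (δ : ℕ → ℕ → C) (n m : ℕ) : C :=
  if n ≤ m then p ^ (m - n) • W m + ∑ j ∈ Finset.range (m - n), p ^ j • δ (n + j) m
  else r ^ (n - m) • W n

variable (p r : R) (W : ℕ → C) (δ : ℕ → ℕ → C)
variable (hδ : ∀ n m, δ n m = r • δ n (m + 1))
variable (hWs : ∀ k, (p * r) • W (k + 1) = W k - δ k k)

include hδ hWs in
lemma cseq_compat : ∀ n m, cseq p r W δ n m = r • cseq p r W δ n (m + 1) := by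
  intro n m
  by_cases h : n ≤ m
  · have h2 : n ≤ m + 1 := by omega
    simp only [cseq, if_pos h, if_pos h2]
    have e1 : m + 1 - n = (m - n) + 1 := by omega
    rw [e1, Finset.sum_range_succ, show n + (m - n) = m by omega]
    have t1 : r • p ^ (m - n + 1) • W (m + 1) = p ^ (m - n) • W m - p ^ (m - n) • δ m m := by
      rw [smul_smul, pow_succ, show r * (p ^ (m - n) * p) = p ^ (m - n) * (p * r) by ring,
        ← smul_smul, hWs m, smul_sub]
    have t2 : r • (∑ j ∈ Finset.range (m - n), p ^ j • δ (n + j) (m + 1))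
        = ∑ j ∈ Finset.range (m - n), p ^ j • δ (n + j) m := by
      rw [Finset.smul_sum]
      refine Finset.sum_congr rfl fun j _ => ?_
      rw [smul_comm, ← hδ]
    have t3 : r • p ^ (m - n) • δ m (m + 1) = p ^ (m - n) • δ m m := by
      rw [smul_comm, ← hδ]
    rw [smul_add, smul_add, t1, t2, t3]
    abel
  · by_cases h2 : n ≤ m + 1
    · have hn : n = m + 1 := by omega
      subst hn
      simp only [cseq, if_neg h, if_pos (le_refl (m + 1))]
      rw [show m + 1 - (m + 1) = 0 by omega, show m + 1 - m = 1 by omega]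
      simp
    · simp only [cseq, if_neg h, if_neg h2]
      rw [smul_smul, show n - m = (n - (m + 1)) + 1 by omega, pow_succ']

include hδ hWs in
lemma cseq_step : ∀ n m, cseq p r W δ n m - p • cseq p r W δ (n + 1) m = δ n m := by
  have hδ' : ∀ n m k, δ n m = r ^ k • δ n (m + k) := by
    intro n m k
    induction k with
    | zero => simp
    | succ k ih =>
      rw [ih, hδ n (m + k), smul_smul, ← pow_succ, show m + k + 1 = m + (k + 1) by omega]
  intro n m
  by_cases h : n + 1 ≤ m
  · have h1 : n ≤ m := by omega
    simp only [cseq, if_pos h1, if_pos h]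
    have e1 : m - n = (m - (n + 1)) + 1 := by omega
    rw [e1, Finset.sum_range_succ']
    have t2 : p • (p ^ (m - (n + 1)) • W m
        + ∑ j ∈ Finset.range (m - (n + 1)), p ^ j • δ (n + 1 + j) m)
        = p ^ (m - (n + 1) + 1) • W m
          + ∑ j ∈ Finset.range (m - (n + 1)), p ^ (j + 1) • δ (n + (j + 1)) m := by
      rw [smul_add, smul_smul, ← pow_succ', Finset.smul_sum]
      congr 1
      refine Finset.sum_congr rfl fun j _ => ?_
      rw [smul_smul, ← pow_succ', show n + (j + 1) = n + 1 + j by omega]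
    rw [t2, pow_zero, add_zero, one_smul]
    abel
  · by_cases h2 : n ≤ m
    · have hm : m = n := by omega
      subst hm
      simp only [cseq, if_pos (le_refl m), if_neg h]
      rw [show m - m = 0 by omega, show m + 1 - m = 1 by omega]
      simp only [pow_zero, one_smul, Finset.range_zero, Finset.sum_empty, add_zero, pow_one]
      rw [smul_smul, hWs m]
      abel
    · simp only [cseq, if_neg h2, if_neg (show ¬ n + 1 ≤ m by omega)]
      rw [smul_smul, show p * r ^ (n + 1 - m) = r ^ (n - m) * (p * r) by
        rw [show n + 1 - m = (n - m) + 1 by omega, pow_succ]; ring]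
      rw [← smul_smul, hWs n, smul_sub, hδ' n m (n - m), show m + (n - m) = n by omega]
      abel

end Cseq

section Main

variable {R C}

lemma homDomain_smul_apply (S : Type) [CommRing S] [Algebra R S]
    (s : S) (f : S →ₗ[R] C) (x : S) : (s • f) x = f (s * x) := rfl

theorem solv_hom (r : R) (hC' : ∀ t : R, Solv t C) (p : R) :
    Solv (algebraMap R (Localization.Away r) p) (Localization.Away r →ₗ[R] C) := by
  intro d
  have hδ : ∀ n m, d n (invS r ^ m) = r • d n (invS r ^ (m + 1)) := by
    intro n m
    rw [← smul_invS_pow r m, map_smul]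
  obtain ⟨W, hW⟩ := hC' (p * r) fun k => d k (invS r ^ k)
  have hWs : ∀ k, (p * r) • W (k + 1) = W k - d k (invS r ^ k) := by
    intro k
    rw [← hW k]
    abel
  have compat := cseq_compat p r W (fun n m => d n (invS r ^ m)) hδ hWs
  have step := cseq_step p r W (fun n m => d n (invS r ^ m)) hδ hWs
  have hex : ∀ n, ∃ f : Localization.Away r →ₗ[R] C,
      ∀ m, f (invS r ^ m) = cseq p r W (fun n m => d n (invS r ^ m)) n m :=
    fun n => hom_mk R C r _ (fun m => compat n m)
  choose f hf using hex
  refine ⟨f, fun n => hom_ext R C r fun m => ?_⟩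
  have hsm : (algebraMap R (Localization.Away r) p • f (n + 1)) (invS r ^ m)
      = p • f (n + 1) (invS r ^ m) := by
    rw [homDomain_smul_apply, ← Algebra.smul_def, map_smul]
  rw [LinearMap.sub_apply, hsm, hf, hf, step n m]

end Main

end ContraAux

open ContraAux in
/-- Let `R` be a commutative ring and `C` a contraadjusted `R`-module
(`Ext¹_R(R[t⁻¹], C) = 0` for every `t ∈ R`).  Then for every `r ∈ R`, the
`R[r⁻¹]`-module `Hom_R(R[r⁻¹], C)` is a contraadjusted `R[r⁻¹]`-module. -/
theorem hom_localization_contraadjusted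
    (R : Type) [CommRing R]
    (C : Type) [AddCommGroup C] [Module R C]
    (hC : ∀ t : R, Subsingleton (((Ext R (ModuleCat R) 1).obj
      (Opposite.op (ModuleCat.of R (Localization.Away t)))).obj (ModuleCat.of R C)))
    (r : R) :
    ∀ t' : Localization.Away r,
      Subsingleton (((Ext (Localization.Away r) (ModuleCat (Localization.Away r)) 1).obj
        (Opposite.op (ModuleCat.of (Localization.Away r) (Localization.Away t')))).obj
        (ModuleCat.of (Localization.Away r) (Localization.Away r →ₗ[R] C))) := by
  intro t'
  rw [subsingleton_ext_iff]
  have hC' : ∀ t : R, Solv t C := fun t => (subsingleton_ext_iff t C).mp (hC t)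
  obtain ⟨⟨a, y⟩, hmk⟩ := IsLocalization.mk'_surjective (Submonoid.powers r) t'
  dsimp only at hmk
  obtain ⟨N, hN⟩ := y.2
  have hspec : t' * algebraMap R (Localization.Away r) (r ^ N) =
      algebraMap R (Localization.Away r) a := by
    have hy : (y : R) = r ^ N := hN.symm
    rw [← hmk, ← hy]
    exact IsLocalization.mk'_spec _ a y
  have hu : IsUnit (algebraMap R (Localization.Away r) (r ^ N)) :=
    IsLocalization.map_units _ ⟨r ^ N, pow_mem (Submonoid.mem_powers r) N⟩
  apply solv_of_unit t' (hu.unit * hu.unit)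
  have heq : t' * ((hu.unit * hu.unit : (Localization.Away r)ˣ) : Localization.Away r)
      = algebraMap R (Localization.Away r) (a * r ^ N) := by
    rw [Units.val_mul, IsUnit.unit_spec, ← mul_assoc, hspec, ← map_mul]
  rw [heq]
  exact solv_hom r hC' (a * r ^ N)
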